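/- Let C = {(x:y:z) ∈ ℙ²(ℂ) : x²·y + x·y² = 0} be the cone over three points (the three concurrent lines x = 0, y = 0, x + y = 0 through (0:0:1)), and let p₁, …, pₙ ∈ C. If the stabilizer subgroup {g ∈ SL(3,ℂ) : g·C = C and g·pᵢ = pᵢ for all i} is infinite, then there exists a projective line l ⊆ ℙ²(ℂ) (the zero set of a nonzero linear form) such that each pᵢ is either the D₄ singular point (0:0:1) or lies on l. -/

import Mathlib

open Matrix

noncomputable section

/-- The special linear group `SL(3, ℂ)`. -/
abbrev SL3 := Matrix.SpecialLinearGroup (Fin 3) ℂ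

/-- The complex projective plane `ℙ²(ℂ)`. -/
abbrev P2 := Projectivization ℂ (Fin 3 → ℂ)

/-- The action of `SL(3, ℂ)` on `ℙ²(ℂ)` induced by the linear action on `ℂ³`. -/
noncomputable def act (g : SL3) (p : P2) : P2 :=
  Projectivization.map (Matrix.SpecialLinearGroup.toLin' g).toLinearMap
    (Matrix.SpecialLinearGroup.toLin' g).injective p

/-- The cone over three points (three concurrent lines), `{x²·y + x·y² = 0}`. -/
def Ccone : Set P2 := {p : P2 | p.rep 0 ^ 2 * p.rep 1 + p.rep 0 * p.rep 1 ^ 2 = 0}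

/-- The `D₄` singular point `(0:0:1)`. -/
def singD4 : P2 := Projectivization.mk ℂ ![0, 0, 1] (by
  intro h; simpa using congrFun h 2)

/-! ### Auxiliary material -/

/-- Matrix-vector action of `SL3` on `ℂ³`. -/
def Mv (g : SL3) (v : Fin 3 → ℂ) : Fin 3 → ℂ := (g : Matrix (Fin 3) (Fin 3) ℂ).mulVec v

lemma Mv_inv (g : SL3) (v : Fin 3 → ℂ) : Mv g⁻¹ (Mv g v) = v := by
  simp only [Mv, mulVec_mulVec]
  rw [← Matrix.SpecialLinearGroup.coe_mul, inv_mul_cancel, Matrix.SpecialLinearGroup.coe_one,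
    Matrix.one_mulVec]

lemma Mv_mul (g h : SL3) (v : Fin 3 → ℂ) : Mv g (Mv h v) = Mv (g * h) v := by
  simp only [Mv, mulVec_mulVec, Matrix.SpecialLinearGroup.coe_mul]

lemma Mv_one (v : Fin 3 → ℂ) : Mv 1 v = v := by
  simp [Mv]

lemma Mv_ne_zero (g : SL3) {v : Fin 3 → ℂ} (hv : v ≠ 0) : Mv g v ≠ 0 := by
  intro h
  apply hv
  rw [← Mv_inv g v, h]
  simp [Mv]

lemma act_mk (g : SL3) (v : Fin 3 → ℂ) (hv : v ≠ 0) :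
    act g (Projectivization.mk ℂ v hv) = Projectivization.mk ℂ (Mv g v) (Mv_ne_zero g hv) := by
  unfold act
  rw [Projectivization.map_mk]
  have h : (Matrix.SpecialLinearGroup.toLin' g).toLinearMap v = Mv g v := by
    simp [Matrix.SpecialLinearGroup.toLin'_apply, Matrix.toLin'_apply, Mv]
  exact (Projectivization.mk_eq_mk_iff ℂ _ _ _ _).2 ⟨1, by rw [one_smul]; exact h.symm⟩

lemma act_one (q : P2) : act 1 q = q := by
  induction q using Projectivization.ind with
  | h v hv =>
    rw [act_mk]
    exact (Projectivization.mk_eq_mk_iff ℂ _ _ _ _).2 ⟨1, by rw [one_smul, Mv_one]⟩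

lemma act_act (g h : SL3) (q : P2) : act g (act h q) = act (g * h) q := by
  induction q using Projectivization.ind with
  | h v hv =>
    rw [act_mk, act_mk, act_mk]
    exact (Projectivization.mk_eq_mk_iff ℂ _ _ _ _).2 ⟨1, by rw [one_smul, Mv_mul]⟩

lemma mem_Ccone_iff {v : Fin 3 → ℂ} (hv : v ≠ 0) :
    Projectivization.mk ℂ v hv ∈ Ccone ↔ v 0 ^ 2 * v 1 + v 0 * v 1 ^ 2 = 0 := by
  obtain ⟨a, ha⟩ := Projectivization.exists_smul_eq_mk_rep ℂ v hv
  have h0 : (Projectivization.mk ℂ v hv).rep 0 = (a : ℂ) * v 0 := by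
    rw [← ha]; simp [Units.smul_def]
  have h1 : (Projectivization.mk ℂ v hv).rep 1 = (a : ℂ) * v 1 := by
    rw [← ha]; simp [Units.smul_def]
  have ha3 : ((a : ℂ)) ^ 3 ≠ 0 := pow_ne_zero _ a.ne_zero
  constructor
  · intro h
    have h' : (a : ℂ) ^ 3 * (v 0 ^ 2 * v 1 + v 0 * v 1 ^ 2) = 0 := by
      have hh := h
      simp only [Ccone, Set.mem_setOf_eq, h0, h1] at hh
      linear_combination hh
    exact (mul_eq_zero.1 h').resolve_left ha3
  · intro h
    simp only [Ccone, Set.mem_setOf_eq, h0, h1]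
    linear_combination ((a : ℂ) ^ 3) * h

lemma cone_inv {g : SL3} (hg : act g '' Ccone = Ccone) {v : Fin 3 → ℂ} (hv : v ≠ 0)
    (h : v 0 ^ 2 * v 1 + v 0 * v 1 ^ 2 = 0) :
    (Mv g v) 0 ^ 2 * (Mv g v) 1 + (Mv g v) 0 * (Mv g v) 1 ^ 2 = 0 := by
  have h1 : Projectivization.mk ℂ v hv ∈ Ccone := (mem_Ccone_iff hv).2 h
  have h2 : act g (Projectivization.mk ℂ v hv) ∈ Ccone := by
    rw [← hg]; exact Set.mem_image_of_mem _ h1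
  rw [act_mk] at h2
  exact (mem_Ccone_iff (Mv_ne_zero g hv)).1 h2

/-- The three linear forms `x`, `y`, `x + y`. -/
def psi (k : Fin 3) (v : Fin 3 → ℂ) : ℂ := ![v 0, v 1, v 0 + v 1] k

lemma psi_zero_apply (v : Fin 3 → ℂ) : psi 0 v = v 0 := by simp [psi]
lemma psi_one_apply (v : Fin 3 → ℂ) : psi 1 v = v 1 := by simp [psi]
lemma psi_two_apply (v : Fin 3 → ℂ) : psi 2 v = v 0 + v 1 := by simp [psi]

lemma psi_lin3 (k : Fin 3) (a b c : ℂ) (x y z : Fin 3 → ℂ) :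
    psi k (a • x + (b • y + c • z)) = a * psi k x + (b * psi k y + c * psi k z) := by
  fin_cases k <;> (simp [psi]; try ring)

lemma exists_unit_vec (k : Fin 3) : ∃ e : Fin 3 → ℂ, psi k e ≠ 0 := by
  fin_cases k
  · exact ⟨![1,0,0], by simp [psi]⟩
  · exact ⟨![0,1,0], by simp [psi]⟩
  · exact ⟨![1,0,0], by simp [psi]⟩

lemma lin_three {a b c d e f : ℂ} (H : ∀ s : ℂ, (a * s + b) * ((c * s + d) * (e * s + f)) = 0) :
    (a = 0 ∧ b = 0) ∨ (c = 0 ∧ d = 0) ∨ (e = 0 ∧ f = 0) := by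
  classical
  have key : ∀ (x y : ℂ), (Polynomial.C x * Polynomial.X + Polynomial.C y = 0) → x = 0 ∧ y = 0 := by
    intro x y h
    constructor
    · have := congrArg (fun q => Polynomial.coeff q 1) h
      simpa using this
    · have := congrArg (fun q => Polynomial.coeff q 0) h
      simpa using this
  have hP : (Polynomial.C a * Polynomial.X + Polynomial.C b) *
      ((Polynomial.C c * Polynomial.X + Polynomial.C d) *
       (Polynomial.C e * Polynomial.X + Polynomial.C f)) = 0 := by
    apply Polynomial.funext
    intro r
    simp [H r]
  rcases mul_eq_zero.1 hP with h | h
  · exact Or.inl (key _ _ h)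
  · rcases mul_eq_zero.1 h with h | h
    · exact Or.inr (Or.inl (key _ _ h))
    · exact Or.inr (Or.inr (key _ _ h))

lemma Mv_lin3 (g : SL3) (a b c : ℂ) (x y z : Fin 3 → ℂ) :
    Mv g (a • x + (b • y + c • z)) = a • Mv g x + (b • Mv g y + c • Mv g z) := by
  simp [Mv, mulVec_add, mulVec_smul]

lemma Mv_lin2 (g : SL3) (a b : ℂ) (x y : Fin 3 → ℂ) :
    Mv g (a • x + b • y) = a • Mv g x + b • Mv g y := by
  simp [Mv, mulVec_add, mulVec_smul]

lemma L1gen (g : SL3) (hg : act g '' Ccone = Ccone) (j : Fin 3)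
    (b0 b1 b2 : Fin 3 → ℂ) (sd td : (Fin 3 → ℂ) → ℂ)
    (hdec : ∀ v, v = psi j v • b0 + (sd v • b1 + td v • b2))
    (hker : ∀ s t : ℂ, (s • b1 + t • b2) 0 ^ 2 * (s • b1 + t • b2) 1 +
      (s • b1 + t • b2) 0 * (s • b1 + t • b2) 1 ^ 2 = 0) :
    ∃ k c, c ≠ 0 ∧ ∀ v, psi k (Mv g v) = c * psi j v := by
  set u := Mv g b1 with hu
  set w := Mv g b2 with hw
  have HF : ∀ s t : ℂ, (s * u 0 + t * w 0) ^ 2 * (s * u 1 + t * w 1) +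
      (s * u 0 + t * w 0) * (s * u 1 + t * w 1) ^ 2 = 0 := by
    intro s t
    by_cases hx : s • b1 + t • b2 = (0 : Fin 3 → ℂ)
    · have h2 : s • u + t • w = 0 := by
        rw [hu, hw, ← Mv_lin2, hx]; simp [Mv]
      have e0 := congrFun h2 0
      have e1 := congrFun h2 1
      simp only [Pi.add_apply, Pi.smul_apply, smul_eq_mul, Pi.zero_apply] at e0 e1
      rw [e0, e1]; ring
    · have hco := cone_inv hg hx (hker s t)
      rw [show Mv g (s • b1 + t • b2) = s • u + t • w from Mv_lin2 g s t b1 b2] at hco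
      simpa only [Pi.add_apply, Pi.smul_apply, smul_eq_mul] using hco
  have tri : (u 0 = 0 ∧ w 0 = 0) ∨ (u 1 = 0 ∧ w 1 = 0) ∨
      (u 0 + u 1 = 0 ∧ w 0 + w 1 = 0) :=
    lin_three (fun s => by linear_combination HF s 1)
  have step : ∀ k : Fin 3, psi k u = 0 → psi k w = 0 →
      ∃ k c, c ≠ 0 ∧ ∀ v, psi k (Mv g v) = c * psi j v := by
    intro k hku hkw
    have main : ∀ v, psi k (Mv g v) = psi k (Mv g b0) * psi j v := by
      intro v
      conv_lhs => rw [hdec v]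
      rw [Mv_lin3, psi_lin3, hku, hkw]; ring
    refine ⟨k, psi k (Mv g b0), ?_, main⟩
    intro h0
    obtain ⟨e, he⟩ := exists_unit_vec k
    apply he
    have hMM : Mv g (Mv g⁻¹ e) = e := by
      have := Mv_inv g⁻¹ e
      rwa [inv_inv] at this
    calc psi k e = psi k (Mv g (Mv g⁻¹ e)) := by rw [hMM]
      _ = psi k (Mv g b0) * psi j (Mv g⁻¹ e) := main _
      _ = 0 := by rw [h0, zero_mul]
  rcases tri with ⟨h1, h2⟩ | ⟨h1, h2⟩ | ⟨h1, h2⟩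
  · exact step 0 (by rw [psi_zero_apply]; exact h1) (by rw [psi_zero_apply]; exact h2)
  · exact step 1 (by rw [psi_one_apply]; exact h1) (by rw [psi_one_apply]; exact h2)
  · exact step 2 (by rw [psi_two_apply]; exact h1) (by rw [psi_two_apply]; exact h2)

lemma L1 (g : SL3) (hg : act g '' Ccone = Ccone) (j : Fin 3) :
    ∃ k c, c ≠ 0 ∧ ∀ v, psi k (Mv g v) = c * psi j v := by
  fin_cases j
  · exact L1gen g hg 0 ![1,0,0] ![0,1,0] ![0,0,1] (fun v => v 1) (fun v => v 2)
      (fun v => by funext i; fin_cases i <;> simp [psi])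
      (fun s t => by simp)
  · exact L1gen g hg 1 ![0,1,0] ![1,0,0] ![0,0,1] (fun v => v 0) (fun v => v 2)
      (fun v => by funext i; fin_cases i <;> simp [psi])
      (fun s t => by simp)
  · exact L1gen g hg 2 ![1,0,0] ![1,-1,0] ![0,0,1] (fun v => -v 1) (fun v => v 2)
      (fun v => by funext i; fin_cases i <;> (simp [psi]; try ring))
      (fun s t => by simp; ring)

lemma eq_singD4 {q : P2} (h0 : q.rep 0 = 0) (h1 : q.rep 1 = 0) : q = singD4 := by
  have hq : Projectivization.mk ℂ q.rep q.rep_nonzero = q := Projectivization.mk_rep q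
  rw [← hq]
  unfold singD4
  apply (Projectivization.mk_eq_mk_iff' ℂ _ _ _ _).2
  exact ⟨q.rep 2, by funext i; fin_cases i <;> simp [h0, h1]⟩

lemma fixed_line {k : SL3}
    (h01 : (k : Matrix (Fin 3) (Fin 3) ℂ) 0 1 = 0)
    (h02 : (k : Matrix (Fin 3) (Fin 3) ℂ) 0 2 = 0)
    (h10 : (k : Matrix (Fin 3) (Fin 3) ℂ) 1 0 = 0)
    (h12 : (k : Matrix (Fin 3) (Fin 3) ℂ) 1 2 = 0)
    (h11 : (k : Matrix (Fin 3) (Fin 3) ℂ) 1 1 = (k : Matrix (Fin 3) (Fin 3) ℂ) 0 0)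
    (q : P2) (hfix : act k q = q) :
    (q.rep 0 = 0 ∧ q.rep 1 = 0) ∨
      ((k : Matrix (Fin 3) (Fin 3) ℂ) 2 0 * q.rep 0 +
        (k : Matrix (Fin 3) (Fin 3) ℂ) 2 1 * q.rep 1 +
        ((k : Matrix (Fin 3) (Fin 3) ℂ) 2 2 - (k : Matrix (Fin 3) (Fin 3) ℂ) 0 0) * q.rep 2 = 0) := by
  set M : Matrix (Fin 3) (Fin 3) ℂ := (k : Matrix (Fin 3) (Fin 3) ℂ) with hMdef
  set x : Fin 3 → ℂ := q.rep with hxdef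
  have hq : Projectivization.mk ℂ x q.rep_nonzero = q := Projectivization.mk_rep q
  have hfix' : act k (Projectivization.mk ℂ x q.rep_nonzero) =
      Projectivization.mk ℂ x q.rep_nonzero := by rw [hq]; exact hfix
  rw [act_mk] at hfix'
  obtain ⟨a, ha⟩ := (Projectivization.mk_eq_mk_iff ℂ _ _ _ _).1 hfix'
  have hMv_e : ∀ i : Fin 3, Mv k x i = M i 0 * x 0 + M i 1 * x 1 + M i 2 * x 2 := by
    intro i; simp [Mv, Matrix.mulVec, dotProduct, Fin.sum_univ_three, hMdef]
  have e0 := congrFun ha 0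
  have e1 := congrFun ha 1
  have e2 := congrFun ha 2
  simp only [Pi.smul_apply, Units.smul_def, smul_eq_mul] at e0 e1 e2
  rw [hMv_e 0, h01, h02] at e0
  rw [hMv_e 1, h10, h12, h11] at e1
  rw [hMv_e 2] at e2
  by_cases hz : x 0 = 0 ∧ x 1 = 0
  · exact Or.inl hz
  · right
    have hA : (a : ℂ) = M 0 0 := by
      by_cases hx0 : x 0 = 0
      · have hx1 : x 1 ≠ 0 := fun h => hz ⟨hx0, h⟩
        apply mul_right_cancel₀ hx1
        linear_combination e1
      · apply mul_right_cancel₀ hx0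
        linear_combination e0
    linear_combination x 2 * hA - e2

lemma inv_mul_mem (n : ℕ) (p : Fin n → P2) {a b : SL3}
    (ha : act a '' Ccone = Ccone ∧ ∀ i, act a (p i) = p i)
    (hb : act b '' Ccone = Ccone ∧ ∀ i, act b (p i) = p i) :
    act (a⁻¹ * b) '' Ccone = Ccone ∧ ∀ i, act (a⁻¹ * b) (p i) = p i := by
  have hcomp : ∀ q, act (a⁻¹ * b) q = act a⁻¹ (act b q) := fun q => (act_act _ _ _).symm
  have hinvfix : ∀ q, act a q = q → act a⁻¹ q = q := by
    intro q hq
    conv_lhs => rw [← hq]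
    rw [act_act, inv_mul_cancel, act_one]
  have hinvC : act a⁻¹ '' Ccone = Ccone := by
    conv_lhs => rw [← ha.1]
    rw [← Set.image_comp]
    have hid : act a⁻¹ ∘ act a = id := funext fun q => by
      simp [Function.comp, act_act, inv_mul_cancel, act_one]
    rw [hid, Set.image_id]
  constructor
  · have hfun : act (a⁻¹ * b) = act a⁻¹ ∘ act b := funext fun q => hcomp q
    rw [hfun, Set.image_comp, hb.1, hinvC]
  · intro i; rw [hcomp, hb.2 i, hinvfix _ (ha.2 i)]

lemma cube_roots_finite : {x : ℂ | x ^ 3 = 1}.Finite := by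
  have hp : (Polynomial.X ^ 3 - Polynomial.C 1 : Polynomial ℂ) ≠ 0 := by
    intro hcon
    have := congrArg (fun q => Polynomial.coeff q 3) hcon
    simp [Polynomial.coeff_one] at this
  apply (Polynomial.finite_setOf_isRoot hp).subset
  intro x hx
  simp only [Set.mem_setOf_eq, Polynomial.IsRoot, Polynomial.eval_sub, Polynomial.eval_pow,
    Polynomial.eval_X, Polynomial.eval_C] at *
  rw [hx]; ring


/-- If marked points on the cone over three points have infinite `SL(3,ℂ)` stabilizer,
then there is a projective line `l` (the zero set of a nonzero linear form) such that
every marked point is the `D₄` singular point `(0:0:1)` or lies on `l`. -/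
theorem coneD4_stabilizer (n : ℕ) (p : Fin n → P2)
    (hp : ∀ i, p i ∈ Ccone)
    (hstab : {g : SL3 | act g '' Ccone = Ccone ∧ ∀ i, act g (p i) = p i}.Infinite) :
    ∃ l : Fin 3 → ℂ, l ≠ 0 ∧ ∀ i, p i = singD4 ∨
      l 0 * (p i).rep 0 + l 1 * (p i).rep 1 + l 2 * (p i).rep 2 = 0 := by
  classical
  set S : Set SL3 := {g : SL3 | act g '' Ccone = Ccone ∧ ∀ i, act g (p i) = p i} with hSdef
  haveI hSinf : Infinite ↥S := hstab.to_subtype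
  have L1' : ∀ g : ↥S, ∀ j : Fin 3, ∃ k c, c ≠ 0 ∧ ∀ v, psi k (Mv (g : SL3) v) = c * psi j v :=
    fun g j => L1 (g : SL3) g.2.1 j
  choose kf cf hcf hff using L1'
  obtain ⟨b, hbinf⟩ := Finite.exists_infinite_fiber (fun g : ↥S => (kf g 0, kf g 1))
  have hT : ((fun g : ↥S => (kf g 0, kf g 1)) ⁻¹' {b}).Infinite := Set.infinite_coe_iff.mp hbinf
  obtain ⟨h0, hh0⟩ := hT.nonempty
  simp only [Set.mem_preimage, Set.mem_singleton_iff] at hh0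
  have claim : ∀ g : ↥S, (kf g 0, kf g 1) = b →
      ((h0 : SL3)⁻¹ * (g : SL3)) ∈ S ∧
      ((((h0 : SL3)⁻¹ * (g : SL3)) : Matrix (Fin 3) (Fin 3) ℂ) 0 1 = 0 ∧
       (((h0 : SL3)⁻¹ * (g : SL3)) : Matrix (Fin 3) (Fin 3) ℂ) 0 2 = 0 ∧
       (((h0 : SL3)⁻¹ * (g : SL3)) : Matrix (Fin 3) (Fin 3) ℂ) 1 0 = 0 ∧
       (((h0 : SL3)⁻¹ * (g : SL3)) : Matrix (Fin 3) (Fin 3) ℂ) 1 2 = 0 ∧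
       (((h0 : SL3)⁻¹ * (g : SL3)) : Matrix (Fin 3) (Fin 3) ℂ) 1 1 =
         (((h0 : SL3)⁻¹ * (g : SL3)) : Matrix (Fin 3) (Fin 3) ℂ) 0 0) := by
    intro g hg
    have hkS : ((h0 : SL3)⁻¹ * (g : SL3)) ∈ S := inv_mul_mem n p h0.2 g.2
    refine ⟨hkS, ?_⟩
    set k : SL3 := (h0 : SL3)⁻¹ * (g : SL3) with hkdef
    set M : Matrix (Fin 3) (Fin 3) ℂ := (k : Matrix (Fin 3) (Fin 3) ℂ) with hMdef
    have hMvk : ∀ v, Mv (h0 : SL3) (Mv k v) = Mv (g : SL3) v := by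
      intro v
      rw [Mv_mul, hkdef, mul_inv_cancel_left]
    have hb0 : kf g 0 = kf h0 0 := by
      have h1 := congrArg Prod.fst hg
      have h2 := congrArg Prod.fst hh0
      simp only at h1 h2
      rw [h1, h2]
    have hb1 : kf g 1 = kf h0 1 := by
      have h1 := congrArg Prod.snd hg
      have h2 := congrArg Prod.snd hh0
      simp only at h1 h2
      rw [h1, h2]
    have hk0 : ∀ v, psi 0 (Mv k v) = (cf g 0 / cf h0 0) * psi 0 v := by
      intro v
      have h1 : psi (kf h0 0) (Mv (h0 : SL3) (Mv k v)) = cf h0 0 * psi 0 (Mv k v) :=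
        hff h0 0 _
      rw [hMvk, ← hb0, hff g 0 v] at h1
      rw [div_mul_eq_mul_div, eq_div_iff (hcf h0 0)]
      linear_combination -h1
    have hk1 : ∀ v, psi 1 (Mv k v) = (cf g 1 / cf h0 1) * psi 1 v := by
      intro v
      have h1 : psi (kf h0 1) (Mv (h0 : SL3) (Mv k v)) = cf h0 1 * psi 1 (Mv k v) :=
        hff h0 1 _
      rw [hMvk, ← hb1, hff g 1 v] at h1
      rw [div_mul_eq_mul_div, eq_div_iff (hcf h0 1)]
      linear_combination -h1
    have hMv_e : ∀ (i : Fin 3) (v : Fin 3 → ℂ),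
        Mv k v i = M i 0 * v 0 + M i 1 * v 1 + M i 2 * v 2 := by
      intro i v; simp [Mv, Matrix.mulVec, dotProduct, Fin.sum_univ_three, hMdef]
    have r00 : M 0 0 = cf g 0 / cf h0 0 := by
      have h1 := hk0 ![1,0,0]
      rw [psi_zero_apply, psi_zero_apply, hMv_e 0] at h1
      simpa using h1
    have r01 : M 0 1 = 0 := by
      have h1 := hk0 ![0,1,0]
      rw [psi_zero_apply, psi_zero_apply, hMv_e 0] at h1
      simpa using h1
    have r02 : M 0 2 = 0 := by
      have h1 := hk0 ![0,0,1]
      rw [psi_zero_apply, psi_zero_apply, hMv_e 0] at h1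
      simpa using h1
    have r10 : M 1 0 = 0 := by
      have h1 := hk1 ![1,0,0]
      rw [psi_one_apply, psi_one_apply, hMv_e 1] at h1
      simpa using h1
    have r11 : M 1 1 = cf g 1 / cf h0 1 := by
      have h1 := hk1 ![0,1,0]
      rw [psi_one_apply, psi_one_apply, hMv_e 1] at h1
      simpa using h1
    have r12 : M 1 2 = 0 := by
      have h1 := hk1 ![0,0,1]
      rw [psi_one_apply, psi_one_apply, hMv_e 1] at h1
      simpa using h1
    refine ⟨r01, r02, r10, r12, ?_⟩
    obtain ⟨m, c, hc, hm⟩ := L1 k hkS.1 2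
    have hm0 := hm ![1,0,0]
    have hm1 := hm ![0,1,0]
    have hm3 : m = 0 ∨ m = 1 ∨ m = 2 := by fin_cases m <;> simp
    rcases hm3 with rfl | rfl | rfl
    · exfalso
      rw [psi_zero_apply, psi_two_apply, hMv_e 0] at hm1
      simp [r01] at hm1
      exact hc hm1.symm
    · exfalso
      rw [psi_one_apply, psi_two_apply, hMv_e 1] at hm0
      simp [r10] at hm0
      exact hc hm0.symm
    · rw [psi_two_apply, psi_two_apply, hMv_e 0, hMv_e 1] at hm0 hm1
      simp [r01, r02, r10, r12] at hm0 hm1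
      -- hm0 : M 0 0 = c, hm1 : M 1 1 = c
      show M 1 1 = M 0 0
      rw [hm1, hm0]
  have hinj : Function.Injective (fun g : ↥S => (h0 : SL3)⁻¹ * (g : SL3)) := by
    intro g1 g2 h
    simp only at h
    exact Subtype.coe_injective (mul_left_cancel h)
  set Sh : Set SL3 := {k : SL3 | k ∈ S ∧
      ((k : Matrix (Fin 3) (Fin 3) ℂ) 0 1 = 0 ∧
       (k : Matrix (Fin 3) (Fin 3) ℂ) 0 2 = 0 ∧
       (k : Matrix (Fin 3) (Fin 3) ℂ) 1 0 = 0 ∧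
       (k : Matrix (Fin 3) (Fin 3) ℂ) 1 2 = 0 ∧
       (k : Matrix (Fin 3) (Fin 3) ℂ) 1 1 = (k : Matrix (Fin 3) (Fin 3) ℂ) 0 0)} with hShdef
  have hShinf : Sh.Infinite := by
    have himg := hT.image (Set.injOn_of_injective hinj)
    apply himg.mono
    rintro _ ⟨g, hgT, rfl⟩
    have hgfib : (kf g 0, kf g 1) = b := by
      simpa [Set.mem_preimage, Set.mem_singleton_iff] using hgT
    exact (claim g hgfib)
  set bad : Set SL3 := {k : SL3 | (k : Matrix (Fin 3) (Fin 3) ℂ) 2 0 = 0 ∧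
      (k : Matrix (Fin 3) (Fin 3) ℂ) 2 1 = 0 ∧
      (k : Matrix (Fin 3) (Fin 3) ℂ) 2 2 = (k : Matrix (Fin 3) (Fin 3) ℂ) 0 0} with hbaddef
  have hbadfin : (Sh ∩ bad).Finite := by
    apply Set.Finite.of_finite_image (f := fun k : SL3 => (k : Matrix (Fin 3) (Fin 3) ℂ) 0 0)
    · apply cube_roots_finite.subset
      rintro _ ⟨kk, ⟨⟨hkS, hsh⟩, hbad⟩, rfl⟩
      show ((kk : Matrix (Fin 3) (Fin 3) ℂ) 0 0) ^ 3 = 1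
      have hM : (kk : Matrix (Fin 3) (Fin 3) ℂ) =
          (kk : Matrix (Fin 3) (Fin 3) ℂ) 0 0 • (1 : Matrix (Fin 3) (Fin 3) ℂ) := by
        ext i j
        fin_cases i <;> fin_cases j <;>
          simp [Matrix.one_apply, hsh.1, hsh.2.1, hsh.2.2.1, hsh.2.2.2.1, hsh.2.2.2.2,
            hbad.1, hbad.2.1, hbad.2.2]
      have hdet : ((kk : Matrix (Fin 3) (Fin 3) ℂ)).det = 1 := kk.2
      rw [hM] at hdet
      simpa [Matrix.det_smul] using hdet
    · rintro k1 ⟨⟨hk1S, hsh1⟩, hbad1⟩ k2 ⟨⟨hk2S, hsh2⟩, hbad2⟩ heq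
      simp only at heq
      apply Subtype.coe_injective
      ext i j
      fin_cases i <;> fin_cases j <;>
        simp [hsh1.1, hsh1.2.1, hsh1.2.2.1, hsh1.2.2.2.1, hsh1.2.2.2.2,
          hbad1.1, hbad1.2.1, hbad1.2.2,
          hsh2.1, hsh2.2.1, hsh2.2.2.1, hsh2.2.2.2.1, hsh2.2.2.2.2,
          hbad2.1, hbad2.2.1, hbad2.2.2, heq]
  obtain ⟨k, hkSh, hknb⟩ := (hShinf.diff hbadfin).nonempty
  have hknbad : k ∉ bad := fun hbb => hknb ⟨hkSh, hbb⟩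
  obtain ⟨hkS, hsh⟩ := hkSh
  refine ⟨![(k : Matrix (Fin 3) (Fin 3) ℂ) 2 0, (k : Matrix (Fin 3) (Fin 3) ℂ) 2 1,
    (k : Matrix (Fin 3) (Fin 3) ℂ) 2 2 - (k : Matrix (Fin 3) (Fin 3) ℂ) 0 0], ?_, ?_⟩
  · intro hl
    apply hknbad
    have e0 := congrFun hl 0
    have e1 := congrFun hl 1
    have e2 := congrFun hl 2
    simp only [Matrix.cons_val_zero, Matrix.cons_val_one, Matrix.head_cons, Pi.zero_apply] at e0 e1 e2
    refine ⟨e0, e1, ?_⟩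
    have : (k : Matrix (Fin 3) (Fin 3) ℂ) 2 2 - (k : Matrix (Fin 3) (Fin 3) ℂ) 0 0 = 0 := by
      simpa using e2
    exact sub_eq_zero.1 this
  · intro i
    rcases fixed_line hsh.1 hsh.2.1 hsh.2.2.1 hsh.2.2.2.1 hsh.2.2.2.2 (p i) (hkS.2 i) with
      ⟨hz0, hz1⟩ | hline
    · exact Or.inl (eq_singD4 hz0 hz1)
    · right
      simpa using hline
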